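/- Stanley's reciprocity theorem: for a finite simple graph g on vertex set I with chromatic polynomial \chi, and any natural number n, (-1)^{|I|} \chi(-n) equals the number of pairs (f, S) where f is an acyclic orientation of g and S : I \to Fin n is a coloring such that for every edge directed from u to v by f, S(u) \le S(v). -/

import Mathlib

variable {α : Type*} [DecidableEq α]

/-- The nonempty edges of the hypergraph `H`. -/
abbrev Edge (H : Finset (Finset α)) := {e : Finset α // e ∈ H ∧ e.Nonempty}

/-- An orientation assigns to each (nonempty) edge one of its vertices. -/
def IsOrientation {H : Finset (Finset α)} (f : Edge H → α) : Prop :=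
  ∀ e : Edge H, f e ∈ e.1

/-- A directed cycle: a nonempty list of distinct edges `e₁, …, e_k` with
`f(eᵢ) ∈ e_{i+1} \ {f(e_{i+1})}`, indices mod `k`. -/
def HasCycle {H : Finset (Finset α)} (f : Edge H → α) : Prop :=
  ∃ l : List (Edge H), l ≠ [] ∧ l.Nodup ∧ ∀ i : Fin l.length,
    f (l.get i) ∈ (l.get ⟨(i.1 + 1) % l.length, Nat.mod_lt _ i.pos⟩).1.1 ∧
    f (l.get i) ≠ f (l.get ⟨(i.1 + 1) % l.length, Nat.mod_lt _ i.pos⟩)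

/-- `S` is compatible with `f`: each edge's head has maximal color in the edge. -/
def Compat {H : Finset (Finset α)} {n : ℕ} (f : Edge H → α) (S : α → Fin n) : Prop :=
  ∀ e : Edge H, ∀ v ∈ e.1, S v ≤ S (f e)

/-- `S` is strictly compatible with `f`: each edge's head is the unique vertex of
maximal color in the edge. -/
def StrictCompat {H : Finset (Finset α)} {n : ℕ} (f : Edge H → α) (S : α → Fin n) : Prop :=
  ∀ e : Edge H, ∀ v ∈ e.1, v ≠ f e → S v < S (f e)

/-- Every nonempty edge of `H` has a unique maximal vertex for the coloring `S`. -/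
def UniqMax {n : ℕ} (H : Finset (Finset α)) (S : α → Fin n) : Prop :=
  ∀ e ∈ H, e.Nonempty → ∃! v, v ∈ e ∧ ∀ w ∈ e, S w ≤ S v

/-- A proper coloring of a graph: no edge is monochromatic. -/
def Proper {n : ℕ} (H : Finset (Finset α)) (S : α → Fin n) : Prop :=
  ∀ e ∈ H, ∀ u ∈ e, ∀ v ∈ e, u ≠ v → S u ≠ S v

namespace StanleyAux

/-- Transitive relation along consecutive steps on an interval of `Fin p`. -/
lemma rel_of_consec {β : Type*} {r : β → β → Prop} (htr : Transitive r) {p : ℕ}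
    (g : Fin p → β) {i j : Fin p} (hij : i < j)
    (h : ∀ k l : Fin p, i ≤ k → (l : ℕ) = (k : ℕ) + 1 → l ≤ j → r (g k) (g l)) :
    r (g i) (g j) := by
  obtain ⟨j, hjp⟩ := j
  induction j with
  | zero => simp [Fin.lt_def] at hij
  | succ m ih =>
    have hmp : m < p := by omega
    rcases Nat.lt_or_ge (i : ℕ) m with hlt | hge
    · exact htr (ih hmp (by exact hlt) (fun k l hk hl hlj => h k l hk hl (by
        simp only [Fin.le_def] at hlj ⊢; omega)))
        (h ⟨m, hmp⟩ ⟨m+1, hjp⟩ (by simp [Fin.le_def]; omega) rfl (by simp [Fin.le_def]))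
    · have : (i : ℕ) = m := by
        have := hij
        simp only [Fin.lt_def] at this; omega
      have hi : i = ⟨m, hmp⟩ := by exact Fin.ext this
      subst hi
      exact h _ ⟨m+1, hjp⟩ le_rfl rfl (by simp [Fin.le_def])

lemma strictMono_of_consec {p : ℕ} {β : Type*} [Preorder β] (y : Fin p → β)
    (h : ∀ (k : ℕ) (hk : k + 1 < p), y ⟨k, by omega⟩ < y ⟨k + 1, hk⟩) : StrictMono y := by
  intro i j hij
  refine rel_of_consec (r := (· < ·)) (fun a b c h1 h2 => lt_trans h1 h2) y hij ?_
  intro k l hk hl hlj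
  have hkp : (k : ℕ) + 1 < p := by have := l.isLt; omega
  have hke : (⟨(k : ℕ), by omega⟩ : Fin p) = k := Fin.ext rfl
  have hle : (⟨(k : ℕ) + 1, hkp⟩ : Fin p) = l := Fin.ext (by simp only [Fin.val_mk]; omega)
  have := h k hkp
  rwa [hke, hle] at this

lemma monotone_of_consec {p : ℕ} {β : Type*} [Preorder β] (y : Fin p → β)
    (h : ∀ (k : ℕ) (hk : k + 1 < p), y ⟨k, by omega⟩ ≤ y ⟨k + 1, hk⟩) : Monotone y := by
  intro i j hij
  rcases eq_or_lt_of_le hij with rfl | hlt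
  · exact le_refl _
  refine rel_of_consec (r := (· ≤ ·)) (fun a b c h1 h2 => le_trans h1 h2) y hlt ?_
  intro k l hk hl hlj
  have hkp : (k : ℕ) + 1 < p := by have := l.isLt; omega
  have hke : (⟨(k : ℕ), by omega⟩ : Fin p) = k := Fin.ext rfl
  have hle : (⟨(k : ℕ) + 1, hkp⟩ : Fin p) = l := Fin.ext (by simp only [Fin.val_mk]; omega)
  have := h k hkp
  rwa [hke, hle] at this

/-- Existence of a sorting permutation with respect to an injective key. -/
lemma exists_sortPerm {α β : Type*} [Fintype α] [LinearOrder β] {p : ℕ}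
    (hp : Fintype.card α = p) (κ : α → β) (hκ : Function.Injective κ) :
    ∃ w : Fin p ≃ α, StrictMono (κ ∘ w) := by
  letI : LinearOrder α := LinearOrder.lift' κ hκ
  have hmono : StrictMono κ := fun a b hab => by
    rcases lt_iff_le_not_ge.mp hab with ⟨h1, h2⟩
    exact lt_iff_le_not_ge.mpr ⟨h1, h2⟩
  exact ⟨(monoEquivOfFin α hp).toEquiv, fun a b hab =>
    hmono ((monoEquivOfFin α hp).strictMono hab)⟩

lemma sortPerm_unique {α β : Type*} [LinearOrder β] {p : ℕ}
    {κ : α → β} (hκ : Function.Injective κ) {w₁ w₂ : Fin p ≃ α}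
    (h1 : StrictMono (κ ∘ w₁)) (h2 : StrictMono (κ ∘ w₂)) : w₁ = w₂ := by
  have hr : Set.range (κ ∘ w₁) = Set.range (κ ∘ w₂) := by
    rw [Set.range_comp, Set.range_comp, Equiv.range_eq_univ, Equiv.range_eq_univ]
  have : κ ∘ ⇑w₁ = κ ∘ ⇑w₂ := (StrictMono.range_inj h1 h2).mp hr
  ext i
  exact hκ (congrFun this i)


section Core
variable {α : Type*} [Fintype α] [DecidableEq α] {p n : ℕ}

/-- The lexicographic sorting key. -/
def key (M : α ≃ Fin p) (w : Fin p ≃ α) (x : Fin p → Fin n) : Fin p → Fin n ×ₗ Fin p :=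
  fun i => toLex (x i, M (w i))

lemma card_eq_sum_sort (hp : Fintype.card α = p) (M : α ≃ Fin p) (P : (α → Fin n) → Prop) :
    Nat.card {T : α → Fin n // P T} =
      ∑ w : Fin p ≃ α,
        Nat.card {x : Fin p → Fin n // StrictMono (key M w x) ∧ P (x ∘ w.symm)} := by
  classical
  have hG : Function.Bijective (fun q : {q : (Fin p ≃ α) × (Fin p → Fin n) //
      StrictMono (key M q.1 q.2) ∧ P (q.2 ∘ q.1.symm)} =>
      (⟨q.1.2 ∘ q.1.1.symm, q.2.2⟩ : {T : α → Fin n // P T})) := by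
    constructor
    · rintro ⟨⟨w₁, x₁⟩, hsm₁, hp₁⟩ ⟨⟨w₂, x₂⟩, hsm₂, hp₂⟩ hT
      simp only [Subtype.mk.injEq] at hT
      set κ : α → Fin n ×ₗ Fin p := fun a => toLex ((x₁ ∘ w₁.symm) a, M a) with hκ
      have hκinj : Function.Injective κ := by
        intro a b hab
        have h2 : M a = M b := congrArg (fun q => (ofLex q).2) hab
        exact M.injective h2
      have k1 : κ ∘ w₁ = key M w₁ x₁ := funext fun i => by
        simp [hκ, key, Function.comp]
      have k2 : κ ∘ w₂ = key M w₂ x₂ := funext fun i => by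
        have h := congrFun hT (w₂ i)
        simp only [Function.comp] at h ⊢
        simp [hκ, key, h]
      have hw : w₁ = w₂ := sortPerm_unique hκinj (k1 ▸ hsm₁) (k2 ▸ hsm₂)
      subst hw
      have hx : x₁ = x₂ := by
        funext i
        have := congrFun hT (w₁ i)
        simpa using this
      simp [hx]
    · rintro ⟨T, hT⟩
      have hκinj : Function.Injective (fun a => toLex (T a, M a) : α → Fin n ×ₗ Fin p) := by
        intro a b hab
        exact M.injective (congrArg (fun q => (ofLex q).2) hab)
      obtain ⟨w, hw⟩ := exists_sortPerm hp (fun a => toLex (T a, M a)) hκinj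
      have hTw : (T ∘ w) ∘ w.symm = T := funext fun a => by simp
      refine ⟨⟨⟨w, T ∘ w⟩, ?_, ?_⟩, ?_⟩
      · have : key M w (T ∘ w) = (fun a => toLex (T a, M a)) ∘ w := funext fun i => by
          simp [key, Function.comp]
        rw [this]; exact hw
      · rw [hTw]; exact hT
      · exact Subtype.ext hTw
  have e1 : {T : α → Fin n // P T} ≃ {q : (Fin p ≃ α) × (Fin p → Fin n) //
      StrictMono (key M q.1 q.2) ∧ P (q.2 ∘ q.1.symm)} := (Equiv.ofBijective _ hG).symm
  have e2 := Equiv.subtypeProdEquivSigmaSubtype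
    (fun (w : Fin p ≃ α) (x : Fin p → Fin n) => StrictMono (key M w x) ∧ P (x ∘ w.symm))
  rw [Nat.card_congr (e1.trans e2), Nat.card_eq_fintype_card, Fintype.card_sigma]
  exact Finset.sum_congr rfl fun w _ => (Nat.card_eq_fintype_card).symm

end Core

section Chain

/-- Weakly increasing chains with prescribed strict steps. -/
def ChainC (n p : ℕ) (str : Finset ℕ) (x : Fin p → Fin n) : Prop :=
  ∀ (k : ℕ) (hk : k + 1 < p),
    x ⟨k, by omega⟩ ≤ x ⟨k + 1, hk⟩ ∧ (k ∈ str → x ⟨k, by omega⟩ < x ⟨k + 1, hk⟩)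

lemma card_strictMonoFn (N p : ℕ) :
    Nat.card {y : Fin p → Fin N // StrictMono y} = N.choose p := by
  classical
  have e : {y : Fin p → Fin N // StrictMono y} ≃ {s : Finset (Fin N) // s.card = p} := by
    refine ⟨fun y => ⟨Finset.univ.image y.1, ?_⟩,
      fun s => ⟨(s.1.orderEmbOfFin s.2 : Fin p → Fin N), (s.1.orderEmbOfFin s.2).strictMono⟩,
      ?_, ?_⟩
    · rw [Finset.card_image_of_injective _ y.2.injective, Finset.card_univ, Fintype.card_fin]
    · rintro ⟨y, hy⟩
      refine Subtype.ext ?_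
      exact (Finset.orderEmbOfFin_unique _ (fun i => Finset.mem_image_of_mem _ (Finset.mem_univ i)) hy).symm
    · rintro ⟨s, hs⟩
      refine Subtype.ext (Finset.coe_injective ?_)
      rw [Finset.coe_image, Finset.coe_univ, Set.image_univ, Finset.range_orderEmbOfFin]
  rw [Nat.card_congr e]
  have e2 : {s : Finset (Fin N) // s.card = p} ≃
      {s : Finset (Fin N) // s ∈ Finset.univ.powersetCard p} :=
    Equiv.subtypeEquivRight fun s => by
      simp [Finset.mem_powersetCard_univ]
  rw [Nat.card_congr e2, Nat.card_eq_fintype_card, Fintype.card_coe,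
    Finset.card_powersetCard, Finset.card_univ, Fintype.card_fin]

lemma card_chain (n p : ℕ) (str : Finset ℕ) (hstr : str ⊆ Finset.range (p - 1)) :
    Nat.card {x : Fin p → Fin n // ChainC n p str x} =
      Nat.choose (n + (p - 1 - str.card)) p := by
  classical
  rcases Nat.eq_zero_or_pos p with hp0 | hp0
  · subst hp0
    haveI : Unique {x : Fin 0 → Fin n // ChainC n 0 str x} :=
      ⟨⟨⟨fun i => i.elim0, fun k hk => absurd hk (by omega)⟩⟩,
        fun x => Subtype.ext (funext fun i => i.elim0)⟩
    simp [Nat.card_unique]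
  set wk : Finset ℕ := Finset.range (p - 1) \ str with hwk
  set W : ℕ := wk.card with hW
  have hWval : W = p - 1 - str.card := by
    rw [hW, hwk, Finset.card_sdiff_of_subset hstr, Finset.card_range]
  set N : ℕ := n + W with hN
  set c : ℕ → ℕ := fun i => (wk.filter (· < i)).card with hc
  have c_mono : ∀ {i j : ℕ}, i ≤ j → c i ≤ c j := by
    intro i j hij
    exact Finset.card_le_card (Finset.filter_subset_filter _ (by simp) |>.trans
      (le_refl _)) |>.trans (Finset.card_le_card (Finset.monotone_filter_right wk
      (fun k _ (h : k < i) => lt_of_lt_of_le h hij)))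
  have c_le : ∀ i, c i ≤ W := fun i => Finset.card_le_card (Finset.filter_subset _ _)
  have c_le_self : ∀ i, c i ≤ i := by
    intro i
    calc c i ≤ (Finset.range i).card := Finset.card_le_card (by
          intro k hk
          simp only [hc, Finset.mem_filter] at hk
          simp [hk.2])
    _ = i := Finset.card_range i
  have c_succ : ∀ k, c (k + 1) = c k + (if k ∈ wk then 1 else 0) := by
    intro k
    have hsplit : wk.filter (· < k + 1) =
        if k ∈ wk then insert k (wk.filter (· < k)) else wk.filter (· < k) := by
      split_ifs with hmem
      · ext a
        simp only [Finset.mem_filter, Finset.mem_insert]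
        constructor
        · rintro ⟨ha, hlt⟩
          rcases Nat.lt_or_ge a k with h | h
          · exact Or.inr ⟨ha, h⟩
          · exact Or.inl (by omega)
        · rintro (rfl | ⟨ha, hlt⟩)
          · exact ⟨hmem, by omega⟩
          · exact ⟨ha, by omega⟩
      · ext a
        simp only [Finset.mem_filter]
        constructor
        · rintro ⟨ha, hlt⟩
          refine ⟨ha, ?_⟩
          rcases Nat.lt_or_ge a k with h | h
          · exact h
          · exfalso; have : a = k := by omega
            exact hmem (this ▸ ha)
        · rintro ⟨ha, hlt⟩; exact ⟨ha, by omega⟩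
    rw [hc]
    simp only [hsplit]
    split_ifs with hmem
    · rw [Finset.card_insert_of_notMem (by simp)]
    · simp
  have c_ge : ∀ i, W ≤ c i + (p - 1 - i) := by
    intro i
    have hsum : c i + (wk.filter (fun k => ¬ k < i)).card = W := by
      simpa using Finset.card_filter_add_card_filter_not (s := wk) (p := fun k => k < i)
    have hsub : wk.filter (fun k => ¬ k < i) ⊆ Finset.Ico i (p - 1) := by
      intro k hk
      simp only [Finset.mem_filter, hwk, Finset.mem_sdiff, Finset.mem_range] at hk
      simp only [Finset.mem_Ico]
      omega
    have := Finset.card_le_card hsub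
    rw [Nat.card_Ico] at this
    omega
  -- the equivalence with strictly monotone functions
  have gap : ∀ (y : Fin p → Fin N), StrictMono y → ∀ (d : ℕ) (i j : Fin p),
      (j : ℕ) = (i : ℕ) + d → (y i : ℕ) + d ≤ (y j : ℕ) := by
    intro y hy d
    induction d with
    | zero => intro i j hij; have : i = j := Fin.ext (by omega); subst this; omega
    | succ m ih =>
      intro i j hij
      have hm : (i : ℕ) + m < p := by have := j.isLt; omega
      have h1 := ih i ⟨(i : ℕ) + m, hm⟩ rfl
      have h2 : y ⟨(i : ℕ) + m, hm⟩ < y j := hy (by simp [Fin.lt_def]; omega)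
      simp only [Fin.lt_def] at h2
      omega
  have e : {x : Fin p → Fin n // ChainC n p str x} ≃
      {y : Fin p → Fin N // StrictMono y} := by
    refine ⟨fun x => ⟨fun i => ⟨(x.1 i : ℕ) + c i, by
        have h1 := (x.1 i).isLt
        have h2 := c_le (i : ℕ)
        omega⟩, ?_⟩,
      fun y => ⟨fun i => ⟨(y.1 i : ℕ) - c i, ?_⟩, ?_⟩, ?_, ?_⟩
    · -- strict monotonicity
      apply strictMono_of_consec
      intro k hk
      have hchain := x.2 k hk
      simp only [Fin.lt_def]
      rcases Classical.em (k ∈ str) with hmem | hmem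
      · have hs := hchain.2 hmem
        have hcm := c_mono (by omega : k ≤ k + 1)
        simp only [Fin.lt_def] at hs
        omega
      · have hkwk : k ∈ wk := by
          simp only [hwk, Finset.mem_sdiff, Finset.mem_range]
          exact ⟨by omega, hmem⟩
        have hcs := c_succ k
        rw [if_pos hkwk] at hcs
        have hw := hchain.1
        simp only [Fin.le_def] at hw
        omega
    · -- value bound for inverse
      have hylt := (y.1 i).isLt
      have hile : (i : ℕ) ≤ (p - 1) := by have := i.isLt; omega
      have hgap := gap y.1 y.2 (p - 1 - (i : ℕ)) i ⟨p - 1, by omega⟩ (by simp; omega)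
      have hlast := (y.1 ⟨p - 1, by omega⟩).isLt
      have hge := c_ge (i : ℕ)
      have hcy : c (i : ℕ) ≤ (i : ℕ) := c_le_self _
      have hiy : (i : ℕ) ≤ (y.1 i : ℕ) := by
        have := gap y.1 y.2 (i : ℕ) ⟨0, hp0⟩ i (by simp)
        omega
      omega
    · -- chain condition for inverse
      intro k hk
      have hstep : y.1 ⟨k, by omega⟩ < y.1 ⟨k + 1, hk⟩ := y.2 (by simp [Fin.lt_def])
      simp only [Fin.lt_def] at hstep
      have hcs := c_succ k
      have hcy : c k ≤ (y.1 ⟨k, by omega⟩ : ℕ) := by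
        have := gap y.1 y.2 k ⟨0, hp0⟩ ⟨k, by omega⟩ (by simp)
        have := c_le_self k
        omega
      constructor
      · simp only [Fin.le_def]
        split_ifs at hcs <;> omega
      · intro hmem
        have hknwk : k ∉ wk := by
          simp only [hwk, Finset.mem_sdiff]
          tauto
        rw [if_neg hknwk] at hcs
        simp only [Fin.lt_def]
        omega
    · -- left inverse
      rintro ⟨x, hx⟩
      refine Subtype.ext (funext fun i => Fin.ext ?_)
      simp
    · -- right inverse
      rintro ⟨y, hy⟩
      refine Subtype.ext (funext fun i => Fin.ext ?_)
      have hcy : c (i : ℕ) ≤ (y i : ℕ) := by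
        have := gap y hy (i : ℕ) ⟨0, hp0⟩ i (by simp)
        have := c_le_self (i : ℕ)
        omega
      simp only
      omega
  rw [Nat.card_congr e, card_strictMonoFn, hN, hWval]

end Chain

section Poly

open Polynomial

/-- The binomial polynomial `C(X + d, p)`. -/
noncomputable def binP (p d : ℕ) : Polynomial ℚ :=
  Polynomial.C ((p.factorial : ℚ)⁻¹) *
    ∏ i ∈ Finset.range p, (Polynomial.X + Polynomial.C ((d : ℚ) - (i : ℚ)))

lemma prod_cast_desc (c p : ℕ) :
    (∏ i ∈ Finset.range p, ((c : ℚ) - (i : ℚ))) = (c.descFactorial p : ℚ) := by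
  rcases Nat.lt_or_ge c p with h | h
  · rw [Nat.descFactorial_eq_zero_iff_lt.mpr h, Nat.cast_zero]
    exact Finset.prod_eq_zero (Finset.mem_range.mpr h) (by simp)
  · rw [Nat.descFactorial_eq_prod_range, Nat.cast_prod]
    refine Finset.prod_congr rfl fun i hi => ?_
    have hic : i ≤ c := le_trans (le_of_lt (Finset.mem_range.mp hi)) h
    rw [Nat.cast_sub hic]

lemma binP_eval_nat (p d m : ℕ) :
    (binP p d).eval (m : ℚ) = ((m + d).choose p : ℚ) := by
  rw [binP, eval_mul, eval_C, eval_prod]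
  have hprod : (∏ i ∈ Finset.range p, ((X : Polynomial ℚ) +
      Polynomial.C ((d : ℚ) - (i : ℚ))).eval (m : ℚ)) =
      (((m + d : ℕ)).descFactorial p : ℚ) := by
    rw [← prod_cast_desc (m + d) p]
    refine Finset.prod_congr rfl fun i hi => ?_
    simp only [eval_add, eval_X, eval_C]
    push_cast
    ring
  rw [hprod, Nat.descFactorial_eq_factorial_mul_choose, Nat.cast_mul]
  have hfac : (p.factorial : ℚ) ≠ 0 := by
    exact_mod_cast Nat.factorial_ne_zero p
  field_simp

lemma binP_eval_neg (p d n : ℕ) (hd : d ≤ p - 1) (hp0 : 0 < p) :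
    (-1 : ℚ) ^ p * (binP p d).eval (-(n : ℚ)) = ((n + (p - 1 - d)).choose p : ℚ) := by
  rw [binP, eval_mul, eval_C, eval_prod]
  have hprod : (∏ i ∈ Finset.range p, ((X : Polynomial ℚ) +
      Polynomial.C ((d : ℚ) - (i : ℚ))).eval (-(n : ℚ))) =
      (-1 : ℚ) ^ p * ∏ i ∈ Finset.range p, ((n : ℚ) - (d : ℚ) + (i : ℚ)) := by
    have hpc : (-1 : ℚ) ^ p = ∏ _i ∈ Finset.range p, (-1 : ℚ) := by
      rw [Finset.prod_const, Finset.card_range]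
    rw [hpc, ← Finset.prod_mul_distrib]
    refine Finset.prod_congr rfl fun i hi => ?_
    simp only [eval_add, eval_X, eval_C]
    ring
  rw [hprod]
  have hrefl : (∏ i ∈ Finset.range p, ((n : ℚ) - (d : ℚ) + (i : ℚ))) =
      (((n + (p - 1 - d) : ℕ)).descFactorial p : ℚ) := by
    rw [← prod_cast_desc (n + (p - 1 - d)) p]
    rw [← Finset.prod_range_reflect (fun i => (n : ℚ) - (d : ℚ) + (i : ℚ)) p]
    refine Finset.prod_congr rfl fun j hj => ?_
    have hjp : j < p := Finset.mem_range.mp hj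
    have e1 : ((p - 1 - j : ℕ) : ℚ) = (p : ℚ) - 1 - (j : ℚ) := by
      have h3 : p - 1 - j + j + 1 = p := by omega
      have h4 := congrArg (fun t : ℕ => (t : ℚ)) h3
      push_cast at h4
      linarith
    have e2 : ((p - 1 - d : ℕ) : ℚ) = (p : ℚ) - 1 - (d : ℚ) := by
      have h3 : p - 1 - d + d + 1 = p := by omega
      have h4 := congrArg (fun t : ℕ => (t : ℚ)) h3
      push_cast at h4
      linarith
    push_cast [e1, e2]
    ring
  rw [hrefl, Nat.descFactorial_eq_factorial_mul_choose, Nat.cast_mul]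
  have hfac : (p.factorial : ℚ) ≠ 0 := by
    exact_mod_cast Nat.factorial_ne_zero p
  field_simp
  rw [← pow_mul, mul_comm p 2, pow_mul]
  norm_num

end Poly

section Graph
variable {α : Type*} [Fintype α] [DecidableEq α] {H : Finset (Finset α)}

/-- The step relation of an orientation: `u → v` if some edge contains `u` and has head `v ≠ u`. -/
def DRel (f : Edge H → α) (u v : α) : Prop :=
  ∃ e : Edge H, u ∈ e.1 ∧ f e = v ∧ u ≠ v

lemma compat_iff_DRel {n : ℕ} (f : Edge H → α) (S : α → Fin n) :
    Compat f S ↔ ∀ u v, DRel f u v → S u ≤ S v := by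
  constructor
  · rintro h u v ⟨e, hue, hfe, hne⟩
    have := h e u hue
    rwa [hfe] at this
  · intro h e v hv
    rcases eq_or_ne v (f e) with rfl | hne
    · exact le_refl _
    · exact h v (f e) ⟨e, hv, rfl, hne⟩

lemma strictCompat_iff_DRel {n : ℕ} (f : Edge H → α) (S : α → Fin n) :
    StrictCompat f S ↔ ∀ u v, DRel f u v → S u < S v := by
  constructor
  · rintro h u v ⟨e, hue, hfe, hne⟩
    have := h e u hue (by rw [hfe]; exact hne)
    rwa [hfe] at this
  · intro h e v hv hne
    exact h v (f e) ⟨e, hv, rfl, hne⟩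

lemma not_transGen_of_not_hasCycle (f : Edge H → α) (hnc : ¬ HasCycle f) (a : α) :
    ¬ Relation.TransGen (DRel f) a a := by
  classical
  intro ha
  -- extract a closed walk
  have hwalk : ∀ b, Relation.TransGen (DRel f) a b →
      ∃ (k : ℕ) (g : ℕ → α), 1 ≤ k ∧ g 0 = a ∧ g k = b ∧ ∀ i < k, DRel f (g i) (g (i + 1)) := by
    intro b hb
    induction hb with
    | @single b h =>
      exact ⟨1, fun t => if t = 0 then a else b, le_refl 1, by simp, by simp, by
        intro i hi
        have : i = 0 := by omega
        subst this
        simpa using h⟩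
    | @tail b c hab hbc ih =>
      obtain ⟨k, g, hk, hg0, hgk, hstep⟩ := ih
      refine ⟨k + 1, fun t => if t = k + 1 then c else g t, by omega, by
        simp only [if_neg (by omega : (0:ℕ) ≠ k + 1)]; exact hg0, by simp, ?_⟩
      intro i hi
      rcases Nat.lt_or_ge i k with h | h
      · simp only [if_neg (by omega : i ≠ k + 1), if_neg (by omega : i + 1 ≠ k + 1)]
        exact hstep i h
      · have : i = k := by omega
        subst this
        simp only [if_neg (by omega : i ≠ i + 1), if_pos rfl]
        rw [hgk]
        exact hbc
  have hex : ∃ k : ℕ, 1 ≤ k ∧ ∃ g : ℕ → α, g 0 = g k ∧ ∀ i < k, DRel f (g i) (g (i + 1)) := by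
    obtain ⟨k, g, hk, hg0, hgk, hstep⟩ := hwalk a ha
    exact ⟨k, hk, g, by rw [hg0, hgk], hstep⟩
  obtain ⟨hk1, g, hgc, hstep⟩ := Nat.find_spec hex
  set k₀ := Nat.find hex with hk₀
  have hmin := fun m (hm : m < k₀) => Nat.find_min hex hm
  have hne_consec : ∀ i < k₀, g i ≠ g (i + 1) := fun i hi => (hstep i hi).choose_spec.2.2
  have hk2 : 2 ≤ k₀ := by
    rcases Nat.lt_or_ge k₀ 2 with h | h
    · exfalso
      have h1 : k₀ = 1 := by omega
      refine hne_consec 0 (by omega) ?_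
      rw [h1] at hgc
      exact hgc
    · exact h
  have hdist : ∀ i j, 1 ≤ i → i < j → j ≤ k₀ → g i ≠ g j := by
    intro i j hi hij hj hgeq
    refine hmin (j - i) (by omega) ⟨by omega, fun t => g (i + t), ?_, ?_⟩
    · show g (i + 0) = g (i + (j - i))
      rw [show i + 0 = i from rfl, show i + (j - i) = j from by omega]
      exact hgeq
    · intro t ht
      show DRel f (g (i + t)) (g (i + (t + 1)))
      rw [show i + (t + 1) = i + t + 1 from by omega]
      exact hstep (i + t) (by omega)
  -- build the cycle
  set E : Fin k₀ → Edge H := fun i => (hstep i.1 i.2).choose with hE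
  have hEmem : ∀ i : Fin k₀, g i.1 ∈ (E i).1 := fun i => (hstep i.1 i.2).choose_spec.1
  have hEhead : ∀ i : Fin k₀, f (E i) = g (i.1 + 1) := fun i => (hstep i.1 i.2).choose_spec.2.1
  have hEinj : Function.Injective E := by
    intro i j hij
    have h1 : g (i.1 + 1) = g (j.1 + 1) := by rw [← hEhead i, ← hEhead j, hij]
    by_contra hne
    have hij' : i.1 ≠ j.1 := fun h => hne (Fin.ext h)
    rcases Nat.lt_or_ge i.1 j.1 with h | h
    · exact hdist (i.1 + 1) (j.1 + 1) (by omega) (by omega) (by have := j.isLt; omega) h1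
    · exact hdist (j.1 + 1) (i.1 + 1) (by omega) (by omega) (by have := i.isLt; omega) h1.symm
  apply hnc
  refine ⟨List.ofFn E, ?_, List.nodup_ofFn.mpr hEinj, ?_⟩
  · intro h
    have := congrArg List.length h
    simp only [List.length_ofFn, List.length_nil] at this
    omega
  · intro i
    have hlen : (List.ofFn E).length = k₀ := List.length_ofFn
    have hget : ∀ j : Fin (List.ofFn E).length, (List.ofFn E).get j = E (Fin.cast hlen j) :=
      fun j => List.get_ofFn E j
    set i' : Fin k₀ := Fin.cast hlen i with hi'
    set m : ℕ := (i.1 + 1) % (List.ofFn E).length with hm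
    have hmlt : m < (List.ofFn E).length := Nat.mod_lt _ i.pos
    set j' : Fin k₀ := Fin.cast hlen ⟨m, hmlt⟩ with hj'
    rw [hget i, hget ⟨m, hmlt⟩]
    have hhead : f (E i') = g (i.1 + 1) := hEhead i'
    rcases Nat.lt_or_ge (i.1 + 1) k₀ with hlt | hge
    · have hj'val : j'.1 = i.1 + 1 := by
        simp only [hj', hm, Fin.coe_cast, hlen]
        exact Nat.mod_eq_of_lt hlt
      constructor
      · rw [hhead]
        have := hEmem j'
        rwa [hj'val] at this
      · rw [hhead, hEhead j', hj'val]
        exact hne_consec (i.1 + 1) (by omega)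
    · have hival : i.1 + 1 = k₀ := by
        have h2 := i.isLt
        omega
      have hj'val : j'.1 = 0 := by
        simp only [hj', hm, Fin.coe_cast, hlen, hival]
        exact Nat.mod_self k₀
      constructor
      · rw [hhead, hival, ← hgc]
        have := hEmem j'
        rwa [hj'val] at this
      · rw [hhead, hEhead j', hj'val, hival, ← hgc]
        exact hne_consec 0 (by omega)

lemma not_hasCycle_of_strictCompat {n : ℕ} (f : Edge H → α) (S : α → Fin n)
    (hsc : StrictCompat f S) : ¬ HasCycle f := by
  rintro ⟨l, hne, hnd, hcyc⟩
  have hk : 0 < l.length := List.length_pos_iff.mpr hne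
  set k := l.length with hkdef
  set v : ℕ → Fin n := fun t => S (f (l.get ⟨t % k, Nat.mod_lt _ hk⟩)) with hv
  have hstep : ∀ t, v t < v (t + 1) := by
    intro t
    have h := hcyc ⟨t % k, Nat.mod_lt _ hk⟩
    have hmod : (t % k + 1) % k = (t + 1) % k := Nat.ModEq.add_right 1 (Nat.mod_modEq t k)
    have := hsc _ _ h.1 h.2
    simp only [hv]
    convert this using 3 <;> simp [hmod, ← hkdef]
  have hmono : ∀ t, v 0 < v (t + 1) := by
    intro t
    induction t with
    | zero => exact hstep 0
    | succ m ih => exact lt_trans ih (hstep (m + 1))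
  have := hmono (k - 1)
  have hkk : k - 1 + 1 = k := by omega
  rw [hkk] at this
  have : v 0 < v k := this
  have hveq : v k = v 0 := by
    simp only [hv]
    congr 2
    simp [Nat.mod_self]
  rw [hveq] at this
  exact lt_irrefl _ this

lemma exists_topo {p : ℕ} (hp : Fintype.card α = p) (f : Edge H → α)
    (hnc : ¬ HasCycle f) : ∃ L : α ≃ Fin p, ∀ u v, DRel f u v → L u < L v := by
  classical
  have hirr := not_transGen_of_not_hasCycle f hnc
  set r : α → α → Prop := fun a b => a = b ∨ Relation.TransGen (DRel f) a b with hr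
  haveI : IsPartialOrder α r :=
    { refl := fun a => Or.inl rfl
      trans := by
        rintro a b c (rfl | hab) (rfl | hbc)
        · exact Or.inl rfl
        · exact Or.inr hbc
        · exact Or.inr hab
        · exact Or.inr (hab.trans hbc)
      antisymm := by
        rintro a b (rfl | hab) (h | hba)
        · rfl
        · rfl
        · exact h.symm
        · exact absurd (hab.trans hba) (hirr a) }
  obtain ⟨s, hlin, hrs⟩ := extend_partialOrder r
  haveI := hlin
  letI : LinearOrder α :=
    { le := s
      le_refl := fun a => _root_.refl_of s a
      le_trans := fun a b c => _root_.trans_of s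
      le_antisymm := fun a b h1 h2 => _root_.antisymm h1 h2
      le_total := fun a b => total_of s a b
      toDecidableLE := fun a b => Classical.dec _ }
  refine ⟨(monoEquivOfFin α hp).symm.toEquiv, ?_⟩
  intro u v huv
  obtain ⟨e, hue, hfe, hne⟩ := huv
  have hsuv : s u v := hrs u v (Or.inr (Relation.TransGen.single ⟨e, hue, hfe, hne⟩))
  have hlt : u < v := by
    refine lt_iff_le_not_ge.mpr ⟨hsuv, fun hvu => hne ?_⟩
    exact _root_.antisymm hsuv hvu
  exact (monoEquivOfFin α hp).symm.strictMono hlt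

variable {p n : ℕ}

/-- `w` is a linear extension of the orientation's step relation. -/
def LinExt (f : Edge H → α) (w : Fin p ≃ α) : Prop :=
  ∀ u v, DRel f u v → w.symm u < w.symm v

open scoped Classical in
/-- Descent positions of `w` relative to the reference labeling `L`. -/
noncomputable def desSet (L : α ≃ Fin p) (w : Fin p ≃ α) : Finset ℕ :=
  (Finset.range (p - 1)).filter fun k =>
    ∀ (h1 : k < p) (h2 : k + 1 < p), L (w ⟨k + 1, h2⟩) < L (w ⟨k, h1⟩)

open scoped Classical in
/-- Ascent positions of `w` relative to the reference labeling `L`. -/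
noncomputable def ascSet (L : α ≃ Fin p) (w : Fin p ≃ α) : Finset ℕ :=
  (Finset.range (p - 1)).filter fun k =>
    ∀ (h1 : k < p) (h2 : k + 1 < p), L (w ⟨k, h1⟩) < L (w ⟨k + 1, h2⟩)

lemma desSet_subset (L : α ≃ Fin p) (w : Fin p ≃ α) :
    desSet L w ⊆ Finset.range (p - 1) := Finset.filter_subset _ _

lemma ascSet_subset (L : α ≃ Fin p) (w : Fin p ≃ α) :
    ascSet L w ⊆ Finset.range (p - 1) := Finset.filter_subset _ _

lemma mem_desSet {L : α ≃ Fin p} {w : Fin p ≃ α} {k : ℕ} (hk : k + 1 < p) :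
    k ∈ desSet L w ↔ (k < p - 1 ∧ L (w ⟨k + 1, hk⟩) < L (w ⟨k, by omega⟩)) := by
  classical
  rw [desSet, Finset.mem_filter, Finset.mem_range]
  constructor
  · rintro ⟨h1, h2⟩
    exact ⟨h1, h2 (by omega) hk⟩
  · rintro ⟨h1, h2⟩
    exact ⟨h1, fun _ _ => h2⟩

lemma mem_ascSet {L : α ≃ Fin p} {w : Fin p ≃ α} {k : ℕ} (hk : k + 1 < p) :
    k ∈ ascSet L w ↔ (k < p - 1 ∧ L (w ⟨k, by omega⟩) < L (w ⟨k + 1, hk⟩)) := by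
  classical
  rw [ascSet, Finset.mem_filter, Finset.mem_range]
  constructor
  · rintro ⟨h1, h2⟩
    exact ⟨h1, h2 (by omega) hk⟩
  · rintro ⟨h1, h2⟩
    exact ⟨h1, fun _ _ => h2⟩

lemma ascSet_card (L : α ≃ Fin p) (w : Fin p ≃ α) (hp0 : 0 < p) :
    (ascSet L w).card = p - 1 - (desSet L w).card := by
  classical
  have hasc : ascSet L w = (Finset.range (p - 1)).filter (fun k => k ∉ desSet L w) := by
    ext k
    simp only [Finset.mem_filter, Finset.mem_range]
    constructor
    · intro hmem
      have h1 : k < p - 1 := Finset.mem_range.mp (ascSet_subset L w hmem)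
      have hk : k + 1 < p := by omega
      refine ⟨h1, fun hdes => ?_⟩
      have ha := (mem_ascSet hk).mp hmem
      have hd := (mem_desSet hk).mp hdes
      exact absurd (lt_trans ha.2 hd.2) (lt_irrefl _)
    · rintro ⟨h1, hnd⟩
      have hk : k + 1 < p := by omega
      refine (mem_ascSet hk).mpr ⟨h1, ?_⟩
      have hne : L (w ⟨k, by omega⟩) ≠ L (w ⟨k + 1, hk⟩) := by
        intro heq
        have := w.injective (L.injective heq)
        simp only [Fin.mk.injEq] at this
        omega
      rcases lt_or_gt_of_ne hne with h | h
      · exact h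
      · exact absurd ((mem_desSet hk).mpr ⟨h1, h⟩) hnd
  have hsum := Finset.card_filter_add_card_filter_not
    (s := Finset.range (p - 1)) (p := fun k => k ∈ desSet L w)
  have hdes : (Finset.range (p - 1)).filter (fun k => k ∈ desSet L w) = desSet L w :=
    Finset.filter_mem_eq_inter.trans (by
      rw [Finset.inter_eq_right.mpr (desSet_subset L w)])
  rw [hdes, Finset.card_range] at hsum
  rw [hasc]
  omega

lemma weak_iff (f : Edge H → α) (L : α ≃ Fin p)
    (hL : ∀ u v, DRel f u v → L u < L v)
    (w : Fin p ≃ α) (x : Fin p → Fin n) :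
    (StrictMono (key L w x) ∧ ∀ u v, DRel f u v → (x ∘ w.symm) u ≤ (x ∘ w.symm) v) ↔
      (LinExt f w ∧ ChainC n p (desSet L w) x) := by
  constructor
  · rintro ⟨hsm, hcomp⟩
    constructor
    · intro u v hD
      have h1 : x (w.symm u) ≤ x (w.symm v) := hcomp u v hD
      have hkey : key L w x (w.symm u) < key L w x (w.symm v) := by
        simp only [key]
        rw [Prod.Lex.lt_iff]
        rcases lt_or_eq_of_le h1 with h | h
        · exact Or.inl h
        · exact Or.inr ⟨h, by simpa using hL u v hD⟩
      exact hsm.lt_iff_lt.mp hkey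
    · intro k hk
      have hlt : (⟨k, by omega⟩ : Fin p) < ⟨k + 1, hk⟩ := by simp [Fin.lt_def]
      have hkey := hsm hlt
      simp only [key] at hkey
      rw [Prod.Lex.lt_iff] at hkey
      constructor
      · rcases hkey with h | ⟨h, _⟩
        · exact le_of_lt h
        · exact le_of_eq h
      · intro hmem
        have hdes := ((mem_desSet hk).mp hmem).2
        rcases hkey with h | ⟨h, h2⟩
        · exact h
        · exact absurd (lt_trans h2 hdes) (lt_irrefl _)
  · rintro ⟨hlin, hch⟩
    have hmono : Monotone x := monotone_of_consec x (fun k hk => (hch k hk).1)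
    constructor
    · apply strictMono_of_consec
      intro k hk
      show key L w x ⟨k, by omega⟩ < key L w x ⟨k + 1, hk⟩
      simp only [key]
      rw [Prod.Lex.lt_iff]
      by_cases hmem : k ∈ desSet L w
      · exact Or.inl ((hch k hk).2 hmem)
      · rcases lt_or_eq_of_le (hch k hk).1 with h | h
        · exact Or.inl h
        · refine Or.inr ⟨h, ?_⟩
          have hne : L (w ⟨k, by omega⟩) ≠ L (w ⟨k + 1, hk⟩) := by
            intro heq
            have := w.injective (L.injective heq)
            simp only [Fin.mk.injEq] at this
            omega
          rcases lt_or_gt_of_ne hne with h' | h'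
          · exact h'
          · exact absurd ((mem_desSet hk).mpr ⟨by omega, h'⟩) hmem
    · intro u v hD
      exact hmono (le_of_lt (hlin u v hD))

lemma strict_iff (f : Edge H → α) (L : α ≃ Fin p)
    (hL : ∀ u v, DRel f u v → L u < L v)
    (w : Fin p ≃ α) (x : Fin p → Fin n) :
    (StrictMono (key (L.trans Fin.revPerm) w x) ∧
        ∀ u v, DRel f u v → (x ∘ w.symm) u < (x ∘ w.symm) v) ↔
      (LinExt f w ∧ ChainC n p (ascSet L w) x) := by
  constructor
  · rintro ⟨hsm, hcomp⟩
    constructor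
    · intro u v hD
      have h1 : x (w.symm u) < x (w.symm v) := hcomp u v hD
      have hkey : key (L.trans Fin.revPerm) w x (w.symm u) <
          key (L.trans Fin.revPerm) w x (w.symm v) := by
        simp only [key]
        rw [Prod.Lex.lt_iff]
        exact Or.inl h1
      exact hsm.lt_iff_lt.mp hkey
    · intro k hk
      have hlt : (⟨k, by omega⟩ : Fin p) < ⟨k + 1, hk⟩ := by simp [Fin.lt_def]
      have hkey := hsm hlt
      simp only [key, Equiv.trans_apply, Fin.revPerm_apply] at hkey
      rw [Prod.Lex.lt_iff] at hkey
      constructor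
      · rcases hkey with h | ⟨h, _⟩
        · exact le_of_lt h
        · exact le_of_eq h
      · intro hmem
        have hasc := ((mem_ascSet hk).mp hmem).2
        rcases hkey with h | ⟨h, h2⟩
        · exact h
        · simp only [ofLex_toLex, Fin.rev_lt_rev] at h2
          exact absurd (lt_trans h2 hasc) (lt_irrefl _)
  · rintro ⟨hlin, hch⟩
    have hmono : Monotone x := monotone_of_consec x (fun k hk => (hch k hk).1)
    constructor
    · apply strictMono_of_consec
      intro k hk
      show key (L.trans Fin.revPerm) w x ⟨k, by omega⟩ <
        key (L.trans Fin.revPerm) w x ⟨k + 1, hk⟩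
      simp only [key, Equiv.trans_apply, Fin.revPerm_apply]
      rw [Prod.Lex.lt_iff]
      by_cases hmem : k ∈ ascSet L w
      · exact Or.inl ((hch k hk).2 hmem)
      · rcases lt_or_eq_of_le (hch k hk).1 with h | h
        · exact Or.inl h
        · refine Or.inr ⟨h, ?_⟩
          simp only [ofLex_toLex, Fin.rev_lt_rev]
          have hne : L (w ⟨k, by omega⟩) ≠ L (w ⟨k + 1, hk⟩) := by
            intro heq
            have := w.injective (L.injective heq)
            simp only [Fin.mk.injEq] at this
            omega
          rcases lt_or_gt_of_ne hne with h' | h'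
          · exact absurd ((mem_ascSet hk).mpr ⟨by omega, h'⟩) hmem
          · exact h'
    · intro u v hD
      have hij : w.symm u < w.symm v := hlin u v hD
      rcases lt_or_eq_of_le (hmono (le_of_lt hij)) with h | h
      · exact h
      exfalso
      -- the interval is flat, so `L ∘ w` strictly decreases, contradicting `hL`
      have hflat : ∀ (k : ℕ), (w.symm u : ℕ) ≤ k → k + 1 ≤ (w.symm v : ℕ) →
          ∀ (h1 : k < p) (h2 : k + 1 < p), x ⟨k, h1⟩ = x ⟨k + 1, h2⟩ := by
        intro k hk1 hk2 h1 h2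
        have hub : x ⟨k + 1, h2⟩ ≤ x (w.symm v) := hmono (by simp [Fin.le_def]; omega)
        have hlb : x (w.symm u) ≤ x ⟨k, h1⟩ := hmono (by simp [Fin.le_def]; omega)
        have hstep : x ⟨k, h1⟩ ≤ x ⟨k + 1, h2⟩ := hmono (by simp [Fin.le_def])
        rw [← h] at hub
        exact le_antisymm hstep (hub.trans hlb)
      have hdec : L (w (w.symm v)) < L (w (w.symm u)) := by
        refine rel_of_consec (r := fun a b => b < a)
          (fun a b c h1 h2 => lt_trans h2 h1) (fun t => L (w t)) hij ?_
        intro kk ll hk1 hl hlj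
        have h2 : (kk : ℕ) + 1 < p := by have := ll.isLt; omega
        have h1 : (kk : ℕ) < p := by omega
        have hkk : (⟨(kk : ℕ), h1⟩ : Fin p) = kk := Fin.ext rfl
        have hll : (⟨(kk : ℕ) + 1, h2⟩ : Fin p) = ll := Fin.ext (by simp only [Fin.val_mk]; omega)
        have hxeq : x ⟨(kk : ℕ), h1⟩ = x ⟨(kk : ℕ) + 1, h2⟩ := by
          refine hflat (kk : ℕ) hk1 ?_ h1 h2
          simp only [Fin.le_def] at hlj
          omega
        have hnasc : (kk : ℕ) ∉ ascSet L w := by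
          intro hmem
          have hlt2 := (hch (kk : ℕ) h2).2 hmem
          have hxeq2 : x ⟨(kk : ℕ), by omega⟩ = x ⟨(kk : ℕ), h1⟩ := rfl
          rw [hxeq2, hxeq] at hlt2
          exact lt_irrefl _ hlt2
        have hne : L (w ⟨(kk : ℕ), h1⟩) ≠ L (w ⟨(kk : ℕ) + 1, h2⟩) := by
          intro heq
          have := w.injective (L.injective heq)
          simp only [Fin.mk.injEq] at this
          omega
        have hlt' : L (w ⟨(kk : ℕ) + 1, h2⟩) < L (w ⟨(kk : ℕ), h1⟩) := by
          rcases lt_or_gt_of_ne hne with h' | h'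
          · exfalso
            refine hnasc ((mem_ascSet h2).mpr ⟨by omega, ?_⟩)
            exact h'
          · exact h'
        rw [hkk, hll] at hlt'
        exact hlt'
      rw [Equiv.apply_symm_apply, Equiv.apply_symm_apply] at hdec
      exact absurd (hL u v hD) (asymm hdec)

lemma card_sigma_fin {ι : Type*} [Fintype ι] (F : ι → Type*) [∀ i, Finite (F i)] :
    Nat.card (Σ i, F i) = ∑ i, Nat.card (F i) := by
  classical
  letI := fun i => Fintype.ofFinite (F i)
  rw [Nat.card_eq_fintype_card, Fintype.card_sigma]
  exact Finset.sum_congr rfl fun i _ => (Nat.card_eq_fintype_card).symm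

open scoped Classical in
lemma card_and_subtype {γ : Type*} (A : Prop) (B : γ → Prop) :
    Nat.card {x : γ // A ∧ B x} = if A then Nat.card {x : γ // B x} else 0 := by
  classical
  split_ifs with hA
  · exact Nat.card_congr (Equiv.subtypeEquivRight fun x => and_iff_right hA)
  · haveI : IsEmpty {x : γ // A ∧ B x} := ⟨fun x => hA x.2.1⟩
    exact Nat.card_of_isEmpty

lemma perF {p : ℕ} (hp : Fintype.card α = p) (hp0 : 0 < p) (f : Edge H → α)
    (hnc : ¬ HasCycle f) :
    ∃ q : Polynomial ℚ,
      (∀ m : ℕ, q.eval (m : ℚ) = (Nat.card {S : α → Fin m // StrictCompat f S} : ℚ)) ∧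
      (∀ n : ℕ, (-1 : ℚ) ^ p * q.eval (-(n : ℚ)) =
        (Nat.card {S : α → Fin n // Compat f S} : ℚ)) := by
  classical
  obtain ⟨L, hL⟩ := exists_topo hp f hnc
  have hdles : ∀ w : Fin p ≃ α, (desSet L w).card ≤ p - 1 := fun w => by
    have := Finset.card_le_card (desSet_subset L w)
    rwa [Finset.card_range] at this
  refine ⟨∑ w ∈ Finset.univ.filter (fun w : Fin p ≃ α => LinExt f w),
      binP p (desSet L w).card, ?_, ?_⟩
  · intro m
    rw [Polynomial.eval_finset_sum]
    have hcount : (Nat.card {S : α → Fin m // StrictCompat f S} : ℚ) =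
        ∑ w ∈ Finset.univ.filter (fun w : Fin p ≃ α => LinExt f w),
          (((m + (desSet L w).card).choose p : ℕ) : ℚ) := by
      rw [Nat.card_congr (Equiv.subtypeEquivRight (fun S => strictCompat_iff_DRel f S))]
      rw [card_eq_sum_sort hp (L.trans Fin.revPerm)
        (fun T => ∀ u v, DRel f u v → T u < T v)]
      have hper : ∀ w : Fin p ≃ α,
          Nat.card {x : Fin p → Fin m //
            StrictMono (key (L.trans Fin.revPerm) w x) ∧
              ∀ u v, DRel f u v → (x ∘ w.symm) u < (x ∘ w.symm) v} =
          if LinExt f w then (m + (desSet L w).card).choose p else 0 := by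
        intro w
        rw [Nat.card_congr (Equiv.subtypeEquivRight (fun x => strict_iff f L hL w x))]
        rw [card_and_subtype]
        split_ifs with hlin
        · rw [card_chain m p (ascSet L w) (ascSet_subset L w), ascSet_card L w hp0]
          congr 1
          have := hdles w
          omega
        · rfl
      have hsum : ∑ w : Fin p ≃ α,
          Nat.card {x : Fin p → Fin m //
            StrictMono (key (L.trans Fin.revPerm) w x) ∧
              ∀ u v, DRel f u v → (x ∘ w.symm) u < (x ∘ w.symm) v} =
          ∑ w ∈ Finset.univ.filter (fun w : Fin p ≃ α => LinExt f w),
            (m + (desSet L w).card).choose p := by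
        rw [Finset.sum_filter]
        exact Finset.sum_congr rfl fun w _ => hper w
      rw [hsum]
      push_cast
      rfl
    rw [hcount]
    exact Finset.sum_congr rfl fun w _ => binP_eval_nat p ((desSet L w).card) m
  · intro n
    rw [Polynomial.eval_finset_sum, Finset.mul_sum]
    have hcount : (Nat.card {S : α → Fin n // Compat f S} : ℚ) =
        ∑ w ∈ Finset.univ.filter (fun w : Fin p ≃ α => LinExt f w),
          (((n + (p - 1 - (desSet L w).card)).choose p : ℕ) : ℚ) := by
      rw [Nat.card_congr (Equiv.subtypeEquivRight (fun S => compat_iff_DRel f S))]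
      rw [card_eq_sum_sort hp L (fun T => ∀ u v, DRel f u v → T u ≤ T v)]
      have hper : ∀ w : Fin p ≃ α,
          Nat.card {x : Fin p → Fin n //
            StrictMono (key L w x) ∧
              ∀ u v, DRel f u v → (x ∘ w.symm) u ≤ (x ∘ w.symm) v} =
          if LinExt f w then (n + (p - 1 - (desSet L w).card)).choose p else 0 := by
        intro w
        rw [Nat.card_congr (Equiv.subtypeEquivRight (fun x => weak_iff f L hL w x))]
        rw [card_and_subtype]
        split_ifs with hlin
        · rw [card_chain n p (desSet L w) (desSet_subset L w)]
        · rfl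
      have hsum : ∑ w : Fin p ≃ α,
          Nat.card {x : Fin p → Fin n //
            StrictMono (key L w x) ∧
              ∀ u v, DRel f u v → (x ∘ w.symm) u ≤ (x ∘ w.symm) v} =
          ∑ w ∈ Finset.univ.filter (fun w : Fin p ≃ α => LinExt f w),
            (n + (p - 1 - (desSet L w).card)).choose p := by
        rw [Finset.sum_filter]
        exact Finset.sum_congr rfl fun w _ => hper w
      rw [hsum]
      push_cast
      rfl
    rw [hcount]
    exact Finset.sum_congr rfl fun w hw =>
      binP_eval_neg p ((desSet L w).card) n (hdles w) hp0

section Head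
variable {m : ℕ}

/-- The vertex of an edge with the largest color (ties broken by a fixed labeling). -/
noncomputable def headOf (S : α → Fin m) (e : Finset α) (he : e.Nonempty) : α :=
  letI : LinearOrder α := LinearOrder.lift'
    (fun a => toLex (S a, Fintype.equivFin α a))
    (fun a b hab => (Fintype.equivFin α).injective (congrArg (fun q => (ofLex q).2) hab))
  e.max' he

lemma headOf_spec (S : α → Fin m) (e : Finset α) (he : e.Nonempty) :
    headOf S e he ∈ e ∧ ∀ v ∈ e, S v ≤ S (headOf S e he) := by
  letI : LinearOrder α := LinearOrder.lift'
    (fun a => toLex (S a, Fintype.equivFin α a))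
    (fun a b hab => (Fintype.equivFin α).injective (congrArg (fun q => (ofLex q).2) hab))
  constructor
  · exact e.max'_mem he
  · intro v hv
    have h : toLex (S v, Fintype.equivFin α v) ≤
        toLex (S (e.max' he), Fintype.equivFin α (e.max' he)) := e.le_max' v hv
    rcases Prod.Lex.le_iff.mp h with h' | ⟨h', _⟩
    · exact le_of_lt h'
    · exact le_of_eq h'

/-- The orientation induced by a coloring. -/
noncomputable def fS (S : α → Fin m) : Edge H → α := fun e => headOf S e.1 e.2.2

lemma isOrientation_fS (S : α → Fin m) : IsOrientation (fS (H := H) S) :=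
  fun e => (headOf_spec S e.1 e.2.2).1

lemma strictCompat_fS (S : α → Fin m) (hS : Proper H S) : StrictCompat (fS (H := H) S) S := by
  intro e v hv hne
  have hle := (headOf_spec S e.1 e.2.2).2 v hv
  have hne' : S v ≠ S (fS S e) :=
    hS e.1 e.2.1 v hv (fS S e) (headOf_spec S e.1 e.2.2).1 hne
  exact lt_of_le_of_ne hle hne'

lemma headOf_eq {S : α → Fin m} {f : Edge H → α} (hor : IsOrientation f)
    (hsc : StrictCompat f S) (e : Edge H) : headOf S e.1 e.2.2 = f e := by
  by_contra hne
  have h1 := (headOf_spec S e.1 e.2.2).2 (f e) (hor e)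
  have h2 := hsc e _ (headOf_spec S e.1 e.2.2).1 hne
  exact absurd (lt_of_lt_of_le h2 h1) (lt_irrefl _)

lemma proper_of_strictCompat (h2 : ∀ e ∈ H, e.card = 2) {S : α → Fin m}
    {f : Edge H → α} (hor : IsOrientation f) (hsc : StrictCompat f S) :
    Proper H S := by
  intro e he u hu v hv huv heq
  have hne : e.Nonempty := Finset.card_pos.mp (by rw [h2 e he]; omega)
  set ed : Edge H := ⟨e, he, hne⟩ with hed
  have hf : f ed ∈ e := hor ed
  have hu' : u ∈ ed.1 := hu
  have hv' : v ∈ ed.1 := hv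
  obtain ⟨a, b, hab, habe⟩ := Finset.card_eq_two.mp (h2 e he)
  have hfuv : f ed = u ∨ f ed = v := by
    rw [habe] at hu hv hf
    simp only [Finset.mem_insert, Finset.mem_singleton] at hu hv hf
    rcases hu with rfl | rfl <;> rcases hv with rfl | rfl <;> tauto
  rcases hfuv with hfu | hfv
  · have hlt := hsc ed v hv' (by rw [hfu]; exact Ne.symm huv)
    rw [hfu, ← heq] at hlt
    rw [heq] at hlt
    exact lt_irrefl _ hlt
  · have hlt := hsc ed u hu' (by rw [hfv]; exact huv)
    rw [hfv, ← heq] at hlt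
    exact lt_irrefl _ hlt

/-- Reshuffle pairs into a sigma type over acyclic orientations. -/
def pairsSigma {m : ℕ} (R : (Edge H → α) → (α → Fin m) → Prop) :
    {q : (Edge H → α) × (α → Fin m) //
        IsOrientation q.1 ∧ ¬ HasCycle q.1 ∧ R q.1 q.2} ≃
      Σ f : {f : Edge H → α // IsOrientation f ∧ ¬ HasCycle f},
        {S : α → Fin m // R f.1 S} where
  toFun q := ⟨⟨q.1.1, q.2.1, q.2.2.1⟩, ⟨q.1.2, q.2.2.2⟩⟩
  invFun s := ⟨⟨s.1.1, s.2.1⟩, s.1.2.1, s.1.2.2, s.2.2⟩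
  left_inv q := rfl
  right_inv s := rfl

lemma card_proper (h2 : ∀ e ∈ H, e.card = 2) (m : ℕ) :
    Nat.card {S : α → Fin m // Proper H S} =
      Nat.card {q : (Edge H → α) × (α → Fin m) //
        IsOrientation q.1 ∧ ¬ HasCycle q.1 ∧ StrictCompat q.1 q.2} := by
  refine Nat.card_congr ⟨fun Sp => ⟨⟨fS Sp.1, Sp.1⟩, isOrientation_fS Sp.1,
      not_hasCycle_of_strictCompat _ _ (strictCompat_fS Sp.1 Sp.2),
      strictCompat_fS Sp.1 Sp.2⟩,
    fun q => ⟨q.1.2, proper_of_strictCompat h2 q.2.1 q.2.2.2⟩, ?_, ?_⟩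
  · intro Sp
    rfl
  · rintro ⟨⟨f, S⟩, hor, hnc, hsc⟩
    refine Subtype.ext (Prod.ext ?_ rfl)
    funext e
    exact headOf_eq hor hsc e

end Head

end Graph

end StanleyAux

open StanleyAux

/-- Stanley's reciprocity theorem: `(-1)^{|I|} χ(-n)` counts compatible pairs of
acyclic orientations and colorings with `n` colors. -/
theorem stmt_13 {α : Type*} [Fintype α] [DecidableEq α] (H : Finset (Finset α))
    (h2 : ∀ e ∈ H, e.card = 2) (χ : Polynomial ℚ)
    (hχ : ∀ m : ℕ, χ.eval (m : ℚ) = Nat.card {S : α → Fin m // Proper H S}) (n : ℕ) :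
    (-1 : ℚ) ^ Fintype.card α * χ.eval (-(n : ℚ)) =
      Nat.card {p : (Edge H → α) × (α → Fin n) //
        IsOrientation p.1 ∧ ¬ HasCycle p.1 ∧ Compat p.1 p.2} := by
  classical
  rcases Nat.eq_zero_or_pos (Fintype.card α) with hp0 | hp0
  · -- the empty vertex set
    haveI hemp : IsEmpty α := Fintype.card_eq_zero_iff.mp hp0
    haveI hedge : IsEmpty (Edge H) := ⟨fun e => hemp.false e.2.2.choose⟩
    have hnc : ∀ f : Edge H → α, ¬ HasCycle f := by
      rintro f ⟨l, hne, _, _⟩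
      have hlen : 0 < l.length := List.length_pos_iff.mpr hne
      exact hedge.false (l.get ⟨0, hlen⟩)
    have hcard1 : ∀ m : ℕ, Nat.card {q : (Edge H → α) × (α → Fin m) //
        IsOrientation q.1 ∧ ¬ HasCycle q.1 ∧ Compat q.1 q.2} = 1 := by
      intro m
      haveI : Nonempty {q : (Edge H → α) × (α → Fin m) //
          IsOrientation q.1 ∧ ¬ HasCycle q.1 ∧ Compat q.1 q.2} :=
        ⟨⟨⟨fun e => isEmptyElim e, fun a => isEmptyElim a⟩,
          fun e => isEmptyElim e, hnc _, fun e => isEmptyElim e⟩⟩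
      haveI : Subsingleton {q : (Edge H → α) × (α → Fin m) //
          IsOrientation q.1 ∧ ¬ HasCycle q.1 ∧ Compat q.1 q.2} := by
        constructor
        rintro ⟨⟨f1, S1⟩, _⟩ ⟨⟨f2, S2⟩, _⟩
        refine Subtype.ext (Prod.ext ?_ ?_)
        · funext e; exact isEmptyElim e
        · funext a; exact isEmptyElim a
      exact Nat.card_unique
    have hprop1 : ∀ m : ℕ, Nat.card {S : α → Fin m // Proper H S} = 1 := by
      intro m
      haveI : Nonempty {S : α → Fin m // Proper H S} :=
        ⟨⟨fun a => isEmptyElim a, fun e he u hu => isEmptyElim u⟩⟩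
      haveI : Subsingleton {S : α → Fin m // Proper H S} := by
        constructor
        rintro ⟨S1, _⟩ ⟨S2, _⟩
        exact Subtype.ext (funext fun a => isEmptyElim a)
      exact Nat.card_unique
    have hchi : χ = Polynomial.C 1 := by
      apply Polynomial.eq_of_infinite_eval_eq
      apply Set.infinite_of_injective_forall_mem (f := fun m : ℕ => (m : ℚ))
        Nat.cast_injective
      intro m
      simp only [Set.mem_setOf_eq, Polynomial.eval_C]
      rw [hχ m, hprop1 m]
      norm_num
    rw [hp0, hchi, hcard1 n]
    simp
  · -- the main case
    have hqs : ∀ f : {f : Edge H → α // IsOrientation f ∧ ¬ HasCycle f},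
        ∃ q : Polynomial ℚ,
          (∀ m : ℕ, q.eval (m : ℚ) =
            (Nat.card {S : α → Fin m // StrictCompat f.1 S} : ℚ)) ∧
          (∀ n : ℕ, (-1 : ℚ) ^ (Fintype.card α) * q.eval (-(n : ℚ)) =
            (Nat.card {S : α → Fin n // Compat f.1 S} : ℚ)) :=
      fun f => perF rfl hp0 f.1 f.2.2
    choose q hq1 hq2 using hqs
    set Q : Polynomial ℚ := ∑ f : {f : Edge H → α // IsOrientation f ∧ ¬ HasCycle f}, q f
      with hQ
    have hQeval : ∀ m : ℕ, Q.eval (m : ℚ) =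
        (Nat.card {S : α → Fin m // Proper H S} : ℚ) := by
      intro m
      rw [hQ, Polynomial.eval_finset_sum, card_proper h2 m,
        Nat.card_congr (pairsSigma (fun f S => StrictCompat f S)),
        card_sigma_fin]
      push_cast
      exact Finset.sum_congr rfl fun f _ => hq1 f m
    have hXQ : χ = Q := by
      apply Polynomial.eq_of_infinite_eval_eq
      apply Set.infinite_of_injective_forall_mem (f := fun m : ℕ => (m : ℚ))
        Nat.cast_injective
      intro m
      simp only [Set.mem_setOf_eq]
      rw [hχ m, hQeval m]
    rw [hXQ, hQ, Polynomial.eval_finset_sum, Finset.mul_sum,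
      Nat.card_congr (pairsSigma (fun f S => Compat f S)), card_sigma_fin]
    push_cast
    exact Finset.sum_congr rfl fun f _ => hq2 f n
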